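/- For λ > 0, y > 0, 0 < t < y and |ρ| ≤ 1 (so y - ρt > 0), one has (1/2)·e^{λρt} ≤ (e^{λy} + e^{-λy})/(e^{λ(y-ρt)} + e^{-λ(y-ρt)}) ≤ 2·e^{λρt}. -/

import Mathlib

/-- Ratio of hyperbolic cosines comparable to `e^{λρt}`. -/
theorem cosh_ratio_bounds (lam y t ρ : ℝ) (hlam : 0 < lam) (hy : 0 < y)
    (ht₀ : 0 < t) (hty : t < y) (hρ : |ρ| ≤ 1) :
    (1 / 2) * Real.exp (lam * ρ * t) ≤
      (Real.exp (lam * y) + Real.exp (-(lam * y))) /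
        (Real.exp (lam * (y - ρ * t)) + Real.exp (-(lam * (y - ρ * t)))) ∧
    (Real.exp (lam * y) + Real.exp (-(lam * y))) /
        (Real.exp (lam * (y - ρ * t)) + Real.exp (-(lam * (y - ρ * t)))) ≤
      2 * Real.exp (lam * ρ * t) := by
  have hρt : ρ * t < y := by
    have h1 : ρ * t ≤ |ρ * t| := le_abs_self _
    have h2 : |ρ * t| = |ρ| * t := by rw [abs_mul, abs_of_pos ht₀]
    nlinarith [abs_nonneg ρ]
  have hypos : 0 < y - ρ * t := by linarith
  set a := lam * y with ha_def
  set b := lam * (y - ρ * t) with hb_def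
  have ha : 0 < a := mul_pos hlam hy
  have hb : 0 < b := mul_pos hlam hypos
  have hab : Real.exp (lam * ρ * t) * Real.exp b = Real.exp a := by
    rw [← Real.exp_add, ha_def, hb_def]; ring_nf
  have hea : Real.exp (-a) ≤ Real.exp a := Real.exp_le_exp.mpr (by linarith)
  have heb : Real.exp (-b) ≤ Real.exp b := Real.exp_le_exp.mpr (by linarith)
  have hpa : 0 < Real.exp (-a) := Real.exp_pos _
  have hpb : 0 < Real.exp (-b) := Real.exp_pos _
  have hpB : 0 < Real.exp b := Real.exp_pos _
  have hpr : 0 < Real.exp (lam * ρ * t) := Real.exp_pos _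
  have hD : 0 < Real.exp b + Real.exp (-b) := by linarith
  constructor
  · rw [le_div_iff₀ hD]
    nlinarith
  · rw [div_le_iff₀ hD]
    nlinarith
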